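/- Let n ≥ 1 and let G be a real n×n matrix with zero diagonal all of whose off-diagonal entries are nonpositive (a Z-matrix). Then the public-good provision game with parameters (G, q) has exactly one Nash equilibrium for every q ∈ ℝⁿ if and only if every real eigenvalue of G is strictly greater than −1 (equivalently, |λ_min(G)| < 1). -/

import Mathlib

open Matrix Finset

/-- Nash equilibrium of the public-good provision game with parameters `(G, q)`. -/
def NashEq {n : ℕ} (G : Matrix (Fin n) (Fin n) ℝ) (q x : Fin n → ℝ) : Prop :=
  ∀ i, x i = max 0 (q i - ∑ j ∈ Finset.univ.erase i, G i j * x j)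

/-- `μ ∈ ℝ` is a (real) eigenvalue of the real matrix `G`. -/
def HasRealEigenvalue {n : ℕ} (G : Matrix (Fin n) (Fin n) ℝ) (μ : ℝ) : Prop :=
  ∃ v : Fin n → ℝ, v ≠ 0 ∧ G.mulVec v = μ • v

section PGAux
open Filter Topology

namespace PG
variable {n : ℕ}

lemma mulVec_apply' (B : Matrix (Fin n) (Fin n) ℝ) (v : Fin n → ℝ) (i : Fin n) :
    B.mulVec v i = ∑ j, B i j * v j := rfl

lemma mulVec_nonneg {B : Matrix (Fin n) (Fin n) ℝ} (hB : ∀ i j, 0 ≤ B i j)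
    {v : Fin n → ℝ} (hv : ∀ i, 0 ≤ v i) (i : Fin n) : 0 ≤ B.mulVec v i := by
  rw [mulVec_apply']
  exact Finset.sum_nonneg fun j _ => mul_nonneg (hB i j) (hv j)

lemma mulVec_mono {B : Matrix (Fin n) (Fin n) ℝ} (hB : ∀ i j, 0 ≤ B i j)
    {v w : Fin n → ℝ} (hvw : ∀ i, v i ≤ w i) (i : Fin n) :
    B.mulVec v i ≤ B.mulVec w i := by
  rw [mulVec_apply', mulVec_apply']
  exact Finset.sum_le_sum fun j _ => mul_le_mul_of_nonneg_left (hvw j) (hB i j)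

lemma exists_pos_of_ne {v : Fin n → ℝ} (hv : ∀ i, 0 ≤ v i) (hvne : v ≠ 0) :
    ∃ j, 0 < v j := by
  by_contra h
  push_neg at h
  exact hvne (funext fun j => le_antisymm (h j) (hv j))

lemma mulVec_pos {B : Matrix (Fin n) (Fin n) ℝ} (hB : ∀ i j, 0 < B i j)
    {v : Fin n → ℝ} (hv : ∀ i, 0 ≤ v i) (hvne : v ≠ 0) (i : Fin n) :
    0 < B.mulVec v i := by
  obtain ⟨j, hj⟩ := exists_pos_of_ne hv hvne
  rw [mulVec_apply']
  calc (0:ℝ) < B i j * v j := mul_pos (hB i j) hj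
    _ ≤ ∑ k, B i k * v k :=
      Finset.single_le_sum (fun k _ => mul_nonneg (hB i k).le (hv k)) (mem_univ j)

lemma t_le_rowsum {B : Matrix (Fin n) (Fin n) ℝ} (hB : ∀ i j, 0 ≤ B i j)
    {C : ℝ} (hC : ∀ i, ∑ j, B i j ≤ C)
    {v : Fin n → ℝ} (hv : ∀ i, 0 ≤ v i) (hsum : ∑ i, v i = 1)
    {t : ℝ} (ht : 0 ≤ t) (hsub : ∀ i, t * v i ≤ B.mulVec v i) : t ≤ C := by
  obtain ⟨j0, hj0⟩ : ∃ j, 0 < v j := by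
    by_contra h
    push_neg at h
    have : ∑ i, v i ≤ 0 := Finset.sum_nonpos fun i _ => h i
    linarith [hsum]
  have hne : (univ : Finset (Fin n)).Nonempty := ⟨j0, mem_univ j0⟩
  obtain ⟨i, -, hi⟩ := Finset.exists_max_image univ v hne
  have hvi : 0 < v i := lt_of_lt_of_le hj0 (hi j0 (mem_univ j0))
  have h1 : t * v i ≤ (∑ j, B i j) * v i := by
    calc t * v i ≤ B.mulVec v i := hsub i
      _ = ∑ j, B i j * v j := mulVec_apply' B v i
      _ ≤ ∑ j, B i j * v i :=
        Finset.sum_le_sum fun j _ => mul_le_mul_of_nonneg_left (hi j (mem_univ j)) (hB i j)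
      _ = (∑ j, B i j) * v i := by rw [Finset.sum_mul]
  have h2 : (∑ j, B i j) * v i ≤ C * v i :=
    mul_le_mul_of_nonneg_right (hC i) hvi.le
  exact le_of_mul_le_mul_right (h1.trans h2) hvi

lemma pf_pos (B : Matrix (Fin n) (Fin n) ℝ) (hB : ∀ i j, 0 < B i j)
    {C : ℝ} (hC : ∀ i, ∑ j, B i j ≤ C)
    {d : Fin n → ℝ} (hd : ∀ i, 0 ≤ d i) (hdne : d ≠ 0)
    (hsub : ∀ i, d i ≤ B.mulVec d i) :
    ∃ t : ℝ, 1 ≤ t ∧ t ≤ C ∧ ∃ v : Fin n → ℝ, (∀ i, 0 ≤ v i) ∧ (∑ i, v i = 1) ∧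
      B.mulVec v = t • v := by
  classical
  set S : Set ((Fin n → ℝ) × ℝ) :=
    {p | (∀ i, 0 ≤ p.1 i) ∧ (∑ i, p.1 i = 1) ∧ 1 ≤ p.2 ∧ p.2 ≤ C ∧
      ∀ i, p.2 * p.1 i ≤ B.mulVec p.1 i} with hSdef
  -- closedness
  have hSclosed : IsClosed S := by
    apply IsClosed.inter
    · have h : IsClosed (⋂ i, {p : (Fin n → ℝ) × ℝ | 0 ≤ p.1 i}) :=
        isClosed_iInter fun i =>
          isClosed_le continuous_const ((continuous_apply i).comp continuous_fst)
      convert h using 1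
      exact Iff.of_eq (congrArg IsClosed (Set.ext fun p => by rw [Set.mem_iInter]; exact Iff.rfl))
    apply IsClosed.inter
    · exact isClosed_eq (continuous_finset_sum _ fun i _ =>
        (continuous_apply i).comp continuous_fst) continuous_const
    apply IsClosed.inter
    · exact isClosed_le continuous_const continuous_snd
    apply IsClosed.inter
    · exact isClosed_le continuous_snd continuous_const
    · have h : IsClosed (⋂ i, {p : (Fin n → ℝ) × ℝ | p.2 * p.1 i ≤ ∑ j, B i j * p.1 j}) :=
        isClosed_iInter fun i =>
          isClosed_le (continuous_snd.mul ((continuous_apply i).comp continuous_fst))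
            (continuous_finset_sum _ fun j _ =>
              continuous_const.mul ((continuous_apply j).comp continuous_fst))
      convert h using 1
      exact Iff.of_eq (congrArg IsClosed (Set.ext fun p => by rw [Set.mem_iInter]; exact Iff.rfl))
  -- an index exists
  obtain ⟨j0, hj0⟩ : ∃ j, 0 < d j := by
    by_contra h
    push_neg at h
    exact hdne (funext fun j => le_antisymm (h j) (hd j))
  have huniv : (univ : Finset (Fin n)).Nonempty := ⟨j0, mem_univ j0⟩
  -- S is compact
  have hKsub : S ⊆ (Set.Icc (0 : Fin n → ℝ) 1) ×ˢ Set.Icc (1:ℝ) C := by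
    rintro ⟨v, t⟩ ⟨h1, h2, h3, h4, h5⟩
    refine ⟨⟨?_, ?_⟩, h3, h4⟩
    · intro i; exact h1 i
    · intro i
      calc v i ≤ ∑ j, v j := Finset.single_le_sum (fun j _ => h1 j) (mem_univ i)
        _ = 1 := h2
  have hScompact : IsCompact S :=
    (isCompact_Icc.prod isCompact_Icc).of_isClosed_subset hSclosed hKsub
  -- S is nonempty
  have hd0 : 0 < ∑ i, d i := by
    have h1 : d j0 ≤ ∑ i, d i := Finset.single_le_sum (fun i _ => hd i) (mem_univ j0)
    linarith
  set s : ℝ := ∑ i, d i with hs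
  set d' : Fin n → ℝ := s⁻¹ • d with hd'
  have hd'nn : ∀ i, 0 ≤ d' i := fun i =>
    mul_nonneg (inv_nonneg.2 hd0.le) (hd i)
  have hd'sum : ∑ i, d' i = 1 := by
    rw [hd']
    simp only [Pi.smul_apply, smul_eq_mul]
    rw [← Finset.mul_sum, ← hs, inv_mul_cancel₀ hd0.ne']
  have hd'sub : ∀ i, (1:ℝ) * d' i ≤ B.mulVec d' i := by
    intro i
    rw [hd', Matrix.mulVec_smul]
    simp only [Pi.smul_apply, smul_eq_mul, one_mul]
    exact mul_le_mul_of_nonneg_left (hsub i) (inv_nonneg.2 hd0.le)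
  have h1C : (1:ℝ) ≤ C :=
    t_le_rowsum (fun i j => (hB i j).le) hC hd'nn hd'sum zero_le_one hd'sub
  have hd'S : (d', (1:ℝ)) ∈ S := ⟨hd'nn, hd'sum, le_refl 1, h1C, hd'sub⟩
  -- maximize t over S
  obtain ⟨p, hpS, hmax⟩ :=
    hScompact.exists_isMaxOn ⟨(d', 1), hd'S⟩ continuous_snd.continuousOn
  obtain ⟨hv1, hv2, ht1, htC, hsubp⟩ := hpS
  refine ⟨p.2, ht1, htC, p.1, hv1, hv2, ?_⟩
  set v := p.1
  set t := p.2
  by_contra hne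
  have hvne : v ≠ 0 := by
    intro h
    rw [h] at hv2
    simp at hv2
  set u : Fin n → ℝ := fun i => B.mulVec v i - t * v i with hu_def
  have hu : ∀ i, 0 ≤ u i := fun i => sub_nonneg.2 (hsubp i)
  have hune : u ≠ 0 := by
    intro h
    apply hne
    funext i
    have hh := congrFun h i
    simp only [hu_def, Pi.zero_apply] at hh
    have : B.mulVec v i = t * v i := by linarith
    simpa [Pi.smul_apply, smul_eq_mul] using this
  set w : Fin n → ℝ := B.mulVec v with hw_def
  have hw : ∀ i, 0 < w i := mulVec_pos hB hv1 hvne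
  have hBu : ∀ i, 0 < B.mulVec u i := mulVec_pos hB hu hune
  have hBw : ∀ i, B.mulVec w i = t * w i + B.mulVec u i := by
    intro i
    have hwv : w = fun j => t * v j + u j := by
      funext j; simp only [hu_def, hw_def]; ring
    calc B.mulVec w i = ∑ j, B i j * (t * v j + u j) := by
          rw [hwv]; rfl
      _ = ∑ j, (t * (B i j * v j) + B i j * u j) :=
          Finset.sum_congr rfl (fun j _ => by ring)
      _ = t * (∑ j, B i j * v j) + ∑ j, B i j * u j := by
          rw [Finset.sum_add_distrib, Finset.mul_sum]
      _ = t * w i + B.mulVec u i := rfl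
  obtain ⟨i0, -, hi0⟩ := Finset.exists_min_image univ (fun i => B.mulVec w i / w i) huniv
  set t' : ℝ := B.mulVec w i0 / w i0 with ht'_def
  have htt' : t < t' := by
    rw [ht'_def, lt_div_iff₀ (hw i0), hBw i0]
    linarith [hBu i0]
  have hsub' : ∀ i, t' * w i ≤ B.mulVec w i := fun i =>
    (le_div_iff₀ (hw i)).1 (hi0 i (mem_univ i))
  have hs' : 0 < ∑ i, w i := Finset.sum_pos (fun i _ => hw i) huniv
  set w' : Fin n → ℝ := (∑ i, w i)⁻¹ • w with hw'_def
  have hw'nn : ∀ i, 0 ≤ w' i := fun i =>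
    mul_nonneg (inv_nonneg.2 hs'.le) (hw i).le
  have hw'sum : ∑ i, w' i = 1 := by
    rw [hw'_def]
    simp only [Pi.smul_apply, smul_eq_mul]
    rw [← Finset.mul_sum, inv_mul_cancel₀ hs'.ne']
  have hw'sub : ∀ i, t' * w' i ≤ B.mulVec w' i := by
    intro i
    rw [hw'_def, Matrix.mulVec_smul]
    simp only [Pi.smul_apply, smul_eq_mul]
    rw [mul_left_comm]
    exact mul_le_mul_of_nonneg_left (hsub' i) (inv_nonneg.2 hs'.le)
  have ht'1 : (1:ℝ) ≤ t' := le_of_lt (lt_of_le_of_lt ht1 htt')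
  have ht'C : t' ≤ C :=
    t_le_rowsum (fun i j => (hB i j).le) hC hw'nn hw'sum
      (le_trans zero_le_one ht'1) hw'sub
  have hmem : (w', t') ∈ S := ⟨hw'nn, hw'sum, ht'1, ht'C, hw'sub⟩
  have := hmax hmem
  simp only [Set.mem_setOf_eq] at this
  change t' ≤ t at this
  linarith


lemma pf_nonneg (B : Matrix (Fin n) (Fin n) ℝ) (hB : ∀ i j, 0 ≤ B i j)
    {d : Fin n → ℝ} (hd : ∀ i, 0 ≤ d i) (hdne : d ≠ 0)
    (hsub : ∀ i, d i ≤ B.mulVec d i) :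
    ∃ t : ℝ, 1 ≤ t ∧ ∃ v : Fin n → ℝ, v ≠ 0 ∧ B.mulVec v = t • v := by
  classical
  set C : ℝ := (∑ i, ∑ j, B i j) + n with hC_def
  -- the perturbed matrices
  set Bk : ℕ → Matrix (Fin n) (Fin n) ℝ :=
    fun k => Matrix.of (fun i j => B i j + ((k:ℝ)+1)⁻¹) with hBk_def
  have heps : ∀ k : ℕ, 0 < ((k:ℝ)+1)⁻¹ := fun k => by positivity
  have heps1 : ∀ k : ℕ, ((k:ℝ)+1)⁻¹ ≤ 1 := fun k => by
    rw [inv_le_one_iff₀]; right; push_cast; linarith [Nat.cast_nonneg (α := ℝ) k]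
  have hBkpos : ∀ k, ∀ i j, 0 < Bk k i j := fun k i j =>
    lt_of_lt_of_le (heps k) (le_add_of_nonneg_left (hB i j))
  have hBkC : ∀ k, ∀ i, ∑ j, Bk k i j ≤ C := by
    intro k i
    have h1 : ∑ j, Bk k i j = (∑ j, B i j) + n * ((k:ℝ)+1)⁻¹ := by
      rw [hBk_def]
      simp [Finset.sum_add_distrib, Finset.card_univ, mul_comm]
    have h2 : (∑ j, B i j) ≤ ∑ i, ∑ j, B i j :=
      Finset.single_le_sum
        (fun i _ => Finset.sum_nonneg fun j _ => hB i j) (mem_univ i)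
    have h3 : (n:ℝ) * ((k:ℝ)+1)⁻¹ ≤ n :=
      le_trans (mul_le_mul_of_nonneg_left (heps1 k) (Nat.cast_nonneg n))
        (by rw [mul_one])
    rw [hC_def, h1]; linarith
  have hBksub : ∀ k, ∀ i, d i ≤ (Bk k).mulVec d i := by
    intro k i
    refine le_trans (hsub i) ?_
    rw [mulVec_apply', mulVec_apply']
    refine Finset.sum_le_sum fun j _ => ?_
    refine mul_le_mul_of_nonneg_right ?_ (hd j)
    exact le_add_of_nonneg_right (heps k).le
  have hex : ∀ k : ℕ, ∃ t : ℝ, (1 ≤ t ∧ t ≤ C) ∧ ∃ v : Fin n → ℝ,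
      (∀ i, 0 ≤ v i) ∧ (∑ i, v i = 1) ∧ (Bk k).mulVec v = t • v := by
    intro k
    obtain ⟨t, h1, h2, v, h3⟩ := pf_pos (Bk k) (hBkpos k) (hBkC k) hd hdne (hBksub k)
    exact ⟨t, ⟨h1, h2⟩, v, h3⟩
  choose tk htk vk hvknn hvksum hvkeq using hex
  -- compactness
  set K : Set ((Fin n → ℝ) × ℝ) := (Set.Icc (0 : Fin n → ℝ) 1) ×ˢ Set.Icc (1:ℝ) C
    with hK_def
  have hmemK : ∀ k, (vk k, tk k) ∈ K := by
    intro k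
    refine ⟨⟨fun i => hvknn k i, fun i => ?_⟩, (htk k).1, (htk k).2⟩
    calc vk k i ≤ ∑ j, vk k j :=
        Finset.single_le_sum (fun j _ => hvknn k j) (mem_univ i)
      _ = 1 := hvksum k
  obtain ⟨a, haK, φ, hφ, hconv⟩ :=
    (isCompact_Icc.prod isCompact_Icc).tendsto_subseq hmemK
  have hv_lim : ∀ i, Tendsto (fun m => vk (φ m) i) atTop (𝓝 (a.1 i)) := by
    intro i
    exact (((continuous_apply i).comp continuous_fst).tendsto a).comp hconv
  have ht_lim : Tendsto (fun m => tk (φ m)) atTop (𝓝 a.2) :=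
    (continuous_snd.tendsto a).comp hconv
  have heps_lim : Tendsto (fun m => ((φ m : ℝ)+1)⁻¹) atTop (𝓝 0) := by
    have h1 : Tendsto (fun m => (φ m : ℝ)) atTop atTop :=
      tendsto_natCast_atTop_atTop.comp hφ.tendsto_atTop
    have h2 : Tendsto (fun m => (φ m : ℝ) + 1) atTop atTop :=
      tendsto_atTop_add_const_right _ 1 h1
    exact h2.inv_tendsto_atTop
  -- key equation
  have hkey : ∀ k i, (∑ j, B i j * vk k j) + ((k:ℝ)+1)⁻¹ = tk k * vk k i := by
    intro k i
    have h := congrFun (hvkeq k) i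
    rw [mulVec_apply'] at h
    have h2 : ∑ j, Bk k i j * vk k j
        = (∑ j, B i j * vk k j) + ((k:ℝ)+1)⁻¹ * ∑ j, vk k j := by
      rw [hBk_def, Finset.mul_sum, ← Finset.sum_add_distrib]
      exact Finset.sum_congr rfl fun j _ => by simp [Matrix.of_apply]; ring
    rw [h2, hvksum k, mul_one] at h
    simpa using h
  -- pass to the limit
  have hsum_lim : ∑ i, a.1 i = 1 := by
    have h1 : Tendsto (fun m => ∑ j, vk (φ m) j) atTop (𝓝 (∑ j, a.1 j)) :=
      tendsto_finset_sum _ fun j _ => hv_lim j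
    have h2 : Tendsto (fun m => ∑ j, vk (φ m) j) atTop (𝓝 1) := by
      simp only [hvksum]; exact tendsto_const_nhds
    exact tendsto_nhds_unique h1 h2
  have heq : ∀ i, B.mulVec a.1 i = a.2 * a.1 i := by
    intro i
    have h1 : Tendsto (fun m => (∑ j, B i j * vk (φ m) j) + ((φ m : ℝ)+1)⁻¹)
        atTop (𝓝 ((∑ j, B i j * a.1 j) + 0)) :=
      (tendsto_finset_sum _ fun j _ => (hv_lim j).const_mul _).add heps_lim
    have h2 : Tendsto (fun m => tk (φ m) * vk (φ m) i) atTop (𝓝 (a.2 * a.1 i)) :=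
      ht_lim.mul (hv_lim i)
    have h3 : (∑ j, B i j * a.1 j) + 0 = a.2 * a.1 i := by
      refine tendsto_nhds_unique ?_ h2
      have : (fun m => (∑ j, B i j * vk (φ m) j) + ((φ m : ℝ)+1)⁻¹)
          = fun m => tk (φ m) * vk (φ m) i := funext fun m => hkey (φ m) i
      rw [← this]; exact h1
    rw [mulVec_apply']; linarith
  have hane : a.1 ≠ 0 := by
    intro h
    rw [h] at hsum_lim
    simp at hsum_lim
  have ha2 : 1 ≤ a.2 := haK.2.1
  exact ⟨a.2, ha2, a.1, hane, funext fun i => by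
    rw [heq i]; simp [Pi.smul_apply, smul_eq_mul]⟩

/-- Reformulation of the Nash equilibrium property using `mulVec` of `B = -G`. -/
lemma nashEq_iff {G : Matrix (Fin n) (Fin n) ℝ} (hdiag : ∀ i, G i i = 0)
    (q x : Fin n → ℝ) :
    NashEq G q x ↔ ∀ i, x i = max 0 (q i + (-G).mulVec x i) := by
  have key : ∀ i, ∑ j ∈ Finset.univ.erase i, G i j * x j = - ((-G).mulVec x i) := by
    intro i
    rw [mulVec_apply']
    have h1 : ∑ j ∈ Finset.univ.erase i, G i j * x j
        = (∑ j, G i j * x j) - G i i * x i :=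
      Finset.sum_erase_eq_sub (mem_univ i)
    rw [h1, hdiag i]
    simp only [Matrix.neg_apply, neg_mul, Finset.sum_neg_distrib, neg_neg, zero_mul,
      sub_zero]
  constructor
  · intro h i
    rw [h i, key i]
    ring_nf
  · intro h i
    rw [h i, key i]
    ring_nf

/-- Forward direction: an eigenvalue `μ ≤ -1` kills uniqueness. -/
lemma two_equilibria {G : Matrix (Fin n) (Fin n) ℝ} (hdiag : ∀ i, G i i = 0)
    {μ : ℝ} (hμ : μ ≤ -1) (hev : HasRealEigenvalue G μ) :
    ∃ q x y : Fin n → ℝ, NashEq G q x ∧ NashEq G q y ∧ x ≠ y := by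
  classical
  obtain ⟨v, hvne, hveq⟩ := hev
  set B : Matrix (Fin n) (Fin n) ℝ := -G with hB_def
  set t : ℝ := -μ with ht_def
  have ht1 : 1 ≤ t := by rw [ht_def]; linarith
  have hBv : ∀ i, B.mulVec v i = t * v i := by
    intro i
    have h := congrFun hveq i
    rw [hB_def, Matrix.neg_mulVec]
    simp only [Pi.neg_apply, Pi.smul_apply, smul_eq_mul] at h ⊢
    rw [h, ht_def]; ring
  set x : Fin n → ℝ := fun i => max (v i) 0 with hx_def
  set y : Fin n → ℝ := fun i => max (-v i) 0 with hy_def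
  have hxy : ∀ i, x i - y i = v i := by
    intro i; rw [hx_def, hy_def]; simp [max_def]; split_ifs <;> linarith
  have hBxy : ∀ i, B.mulVec x i - B.mulVec y i = t * v i := by
    intro i
    rw [← hBv i, mulVec_apply', mulVec_apply', mulVec_apply', ← Finset.sum_sub_distrib]
    exact Finset.sum_congr rfl fun j _ => by rw [← mul_sub, hxy j]
  set q : Fin n → ℝ := fun i =>
    if 0 ≤ v i then v i - B.mulVec x i else -(v i) - B.mulVec y i with hq_def
  refine ⟨q, x, y, ?_, ?_, ?_⟩
  · rw [nashEq_iff hdiag]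
    intro i
    rw [← hB_def, hq_def]
    by_cases hvi : 0 ≤ v i
    · simp only [hvi, if_true]
      have : v i - B.mulVec x i + B.mulVec x i = v i := by ring
      rw [this, hx_def]
      simp [max_comm, max_def]
    · simp only [hvi, if_false]
      push_neg at hvi
      have h1 : -(v i) - B.mulVec y i + B.mulVec x i = (t - 1) * v i + (v i - v i) := by
        have := hBxy i; ring_nf; ring_nf at this; linarith
      have h2 : (t - 1) * v i ≤ 0 :=
        mul_nonpos_of_nonneg_of_nonpos (by linarith) hvi.le
      have hx0 : x i = 0 := by rw [hx_def]; simp; linarith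
      rw [hx0]
      have : -(v i) - B.mulVec y i + B.mulVec x i ≤ 0 := by
        rw [h1]; simp; linarith
      rw [max_eq_left this]
  · rw [nashEq_iff hdiag]
    intro i
    rw [← hB_def, hq_def]
    by_cases hvi : 0 ≤ v i
    · simp only [hvi, if_true]
      have h1 : v i - B.mulVec x i + B.mulVec y i = (1 - t) * v i := by
        have := hBxy i; ring_nf; ring_nf at this; linarith
      have h2 : (1 - t) * v i ≤ 0 :=
        mul_nonpos_of_nonpos_of_nonneg (by linarith) hvi
      have hy0 : y i = 0 := by rw [hy_def]; simp; linarith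
      rw [hy0, h1, max_eq_left h2]
    · simp only [hvi, if_false]
      push_neg at hvi
      have : -(v i) - B.mulVec y i + B.mulVec y i = -(v i) := by ring
      rw [this, hy_def]
      simp [max_comm, max_def]
  · intro h
    apply hvne
    funext i
    have := hxy i
    rw [h] at this
    simpa using this.symm

/-- entrywise nonnegativity of `-G` for a Z-matrix `G`. -/
lemma negG_nonneg {G : Matrix (Fin n) (Fin n) ℝ} (hdiag : ∀ i, G i i = 0)
    (hZ : ∀ i j, i ≠ j → G i j ≤ 0) : ∀ i j, 0 ≤ (-G) i j := by
  intro i j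
  rw [Matrix.neg_apply]
  by_cases h : i = j
  · subst h; rw [hdiag i]; norm_num
  · linarith [hZ i j h]

/-- The key consequence of the eigenvalue hypothesis. -/
lemma no_subinvariant {G : Matrix (Fin n) (Fin n) ℝ} (hdiag : ∀ i, G i i = 0)
    (hZ : ∀ i j, i ≠ j → G i j ≤ 0)
    (heig : ∀ μ : ℝ, HasRealEigenvalue G μ → -1 < μ) :
    ∀ d : Fin n → ℝ, (∀ i, 0 ≤ d i) → (∀ i, d i ≤ (-G).mulVec d i) → d = 0 := by
  intro d hd hsub
  by_contra hdne
  obtain ⟨t, ht, v, hvne, hveq⟩ :=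
    pf_nonneg (-G) (negG_nonneg hdiag hZ) hd hdne hsub
  have hGv : G.mulVec v = (-t) • v := by
    have h : (-G).mulVec v = -(G.mulVec v) := by
      funext i
      show ∑ j, (-G) i j * v j = -(∑ j, G i j * v j)
      rw [← Finset.sum_neg_distrib]
      exact Finset.sum_congr rfl fun j _ => by rw [Matrix.neg_apply]; ring
    rw [h] at hveq
    have := congrArg Neg.neg hveq
    rw [neg_neg] at this
    rw [this]
    funext i
    simp [Pi.smul_apply, smul_eq_mul]
  have := heig (-t) ⟨v, hvne, hGv⟩
  linarith

lemma abs_mulVec_le {B : Matrix (Fin n) (Fin n) ℝ} (hB : ∀ i j, 0 ≤ B i j)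
    (z : Fin n → ℝ) (i : Fin n) :
    |B.mulVec z i| ≤ B.mulVec (fun j => |z j|) i := by
  rw [mulVec_apply', mulVec_apply']
  refine le_trans (Finset.abs_sum_le_sum_abs _ _) ?_
  refine Finset.sum_le_sum fun j _ => ?_
  rw [abs_mul, abs_of_nonneg (hB i j)]

/-- Uniqueness of equilibrium under the eigenvalue hypothesis. -/
lemma nash_unique {G : Matrix (Fin n) (Fin n) ℝ} (hdiag : ∀ i, G i i = 0)
    (hZ : ∀ i j, i ≠ j → G i j ≤ 0)
    (heig : ∀ μ : ℝ, HasRealEigenvalue G μ → -1 < μ)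
    {q x y : Fin n → ℝ} (hx : NashEq G q x) (hy : NashEq G q y) : x = y := by
  set B : Matrix (Fin n) (Fin n) ℝ := -G with hB_def
  have hBnn := negG_nonneg hdiag hZ
  rw [nashEq_iff hdiag] at hx hy
  set d : Fin n → ℝ := fun i => |x i - y i| with hd_def
  have hsub : ∀ i, d i ≤ B.mulVec d i := by
    intro i
    have h1 : d i = |max 0 (q i + B.mulVec x i) - max 0 (q i + B.mulVec y i)| := by
      rw [hd_def, ← hx i, ← hy i]
    have h2 : |max 0 (q i + B.mulVec x i) - max 0 (q i + B.mulVec y i)|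
        ≤ |(q i + B.mulVec x i) - (q i + B.mulVec y i)| := by
      rw [max_comm 0 (q i + B.mulVec x i), max_comm 0 (q i + B.mulVec y i)]
      exact abs_max_sub_max_le_abs _ _ _
    have h3 : (q i + B.mulVec x i) - (q i + B.mulVec y i) = B.mulVec (x - y) i := by
      rw [Matrix.mulVec_sub]; simp
    have h4 : |B.mulVec (x - y) i| ≤ B.mulVec (fun j => |(x - y) j|) i :=
      abs_mulVec_le hBnn (x - y) i
    have h5 : (fun j => |(x - y) j|) = d := by
      funext j; rw [hd_def]; simp
    rw [h1]
    calc |max 0 (q i + B.mulVec x i) - max 0 (q i + B.mulVec y i)|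
        ≤ |(q i + B.mulVec x i) - (q i + B.mulVec y i)| := h2
      _ = |B.mulVec (x - y) i| := by rw [h3]
      _ ≤ B.mulVec (fun j => |(x - y) j|) i := h4
      _ = B.mulVec d i := by rw [h5]
  have hd0 : d = 0 := no_subinvariant hdiag hZ heig d (fun i => abs_nonneg _) hsub
  funext i
  have := congrFun hd0 i
  rw [hd_def] at this
  simp only [Pi.zero_apply] at this
  have := abs_eq_zero.1 this
  linarith

lemma nash_exists {G : Matrix (Fin n) (Fin n) ℝ} (hdiag : ∀ i, G i i = 0)
    (hZ : ∀ i j, i ≠ j → G i j ≤ 0)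
    (heig : ∀ μ : ℝ, HasRealEigenvalue G μ → -1 < μ) (q : Fin n → ℝ) :
    ∃ x : Fin n → ℝ, NashEq G q x := by
  classical
  set B : Matrix (Fin n) (Fin n) ℝ := -G with hB_def
  have hBnn : ∀ i j, 0 ≤ B i j := negG_nonneg hdiag hZ
  have hstar := no_subinvariant hdiag hZ heig
  set c : Fin n → ℝ := fun i => max (q i) 0 with hc_def
  have hcnn : ∀ i, 0 ≤ c i := fun i => le_max_right _ _
  have hqc : ∀ i, q i ≤ c i := fun i => le_max_left _ _
  -- invertibility of 1 - B
  have hinj : Function.Injective ((1 - B).mulVecLin) := by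
    rw [injective_iff_map_eq_zero]
    intro z hz
    rw [Matrix.mulVecLin_apply, Matrix.sub_mulVec, Matrix.one_mulVec] at hz
    have hBz : ∀ i, B.mulVec z i = z i := by
      intro i
      have := congrFun hz i
      simp only [Pi.sub_apply, Pi.zero_apply] at this
      linarith
    have hd : (fun i => |z i|) = 0 := by
      refine hstar _ (fun i => abs_nonneg _) fun i => ?_
      calc |z i| = |B.mulVec z i| := by rw [hBz i]
        _ ≤ B.mulVec (fun j => |z j|) i := abs_mulVec_le hBnn z i
    funext i
    have := congrFun hd i
    simp only [Pi.zero_apply] at this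
    exact abs_eq_zero.1 this
  have hsurj : Function.Surjective ((1 - B).mulVecLin) :=
    LinearMap.injective_iff_surjective.1 hinj
  obtain ⟨u, hu⟩ := hsurj c
  rw [Matrix.mulVecLin_apply, Matrix.sub_mulVec, Matrix.one_mulVec] at hu
  have huB : ∀ i, u i - B.mulVec u i = c i := fun i => by
    have := congrFun hu i
    simpa using this
  -- u is nonnegative
  have hunn : ∀ i, 0 ≤ u i := by
    set up : Fin n → ℝ := fun i => max (u i) 0 with hup_def
    set um : Fin n → ℝ := fun i => max (-u i) 0 with hum_def
    have hupnn : ∀ i, 0 ≤ up i := fun i => le_max_right _ _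
    have humnn : ∀ i, 0 ≤ um i := fun i => le_max_right _ _
    have hsplit : ∀ i, um i = up i - u i := by
      intro i; rw [hum_def, hup_def]; simp [max_def]; split_ifs <;> linarith
    have hBum : ∀ i, B.mulVec um i = B.mulVec up i - B.mulVec u i := by
      intro i
      rw [mulVec_apply', mulVec_apply', mulVec_apply', ← Finset.sum_sub_distrib]
      exact Finset.sum_congr rfl fun j _ => by rw [hsplit j]; ring
    have hum0 : um = 0 := by
      refine hstar um humnn fun i => ?_
      by_cases h : 0 ≤ u i
      · have : um i = 0 := by rw [hum_def]; simp; linarith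
        rw [this]
        exact mulVec_nonneg hBnn humnn i
      · push_neg at h
        have h1 : um i = -u i := by rw [hum_def]; simp; linarith
        have h2 : 0 ≤ B.mulVec up i := mulVec_nonneg hBnn hupnn i
        have h3 : B.mulVec u i = u i - c i := by linarith [huB i]
        rw [h1, hBum i, h3]
        linarith [hcnn i]
    intro i
    have h := congrFun hum0 i
    rw [hum_def] at h
    simp only [Pi.zero_apply] at h
    have h2 : -u i ≤ max (-u i) 0 := le_max_left _ _
    rw [h] at h2
    linarith
  -- the monotone iteration
  set T : (Fin n → ℝ) → (Fin n → ℝ) :=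
    fun y i => max 0 (q i + B.mulVec y i) with hT_def
  set xs : ℕ → Fin n → ℝ := fun k => T^[k] 0 with hxs_def
  have hstep : ∀ k, xs (k+1) = T (xs k) := by
    intro k
    rw [hxs_def]
    exact Function.iterate_succ_apply' T k 0
  have hTmono : ∀ y z : Fin n → ℝ, (∀ i, y i ≤ z i) → ∀ i, T y i ≤ T z i := by
    intro y z hyz i
    rw [hT_def]
    exact max_le_max (le_refl 0) (by linarith [mulVec_mono hBnn hyz i])
  have hTnn : ∀ y : Fin n → ℝ, ∀ i, 0 ≤ T y i := fun y i => le_max_left _ _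
  have hinc : ∀ k i, xs k i ≤ xs (k+1) i := by
    intro k
    induction k with
    | zero =>
      intro i
      rw [hstep 0]
      have : xs 0 = (0 : Fin n → ℝ) := rfl
      rw [this]
      exact hTnn 0 i
    | succ m ih =>
      intro i
      rw [hstep (m+1), hstep m]
      exact hTmono _ _ (fun j => by rw [← hstep m]; exact ih j) i
  have hmonok : ∀ i, Monotone (fun k => xs k i) :=
    fun i => monotone_nat_of_le_succ fun k => hinc k i
  have hbd : ∀ k i, xs k i ≤ u i := by
    intro k
    induction k with
    | zero => intro i; exact hunn i
    | succ m ih =>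
      intro i
      rw [hstep m, hT_def]
      have h1 : q i + B.mulVec (xs m) i ≤ c i + B.mulVec u i := by
        have := mulVec_mono hBnn ih i
        linarith [hqc i]
      have h2 : c i + B.mulVec u i = u i := by linarith [huB i]
      calc max 0 (q i + B.mulVec (xs m) i) ≤ max 0 (c i + B.mulVec u i) :=
            max_le_max (le_refl 0) h1
        _ = max 0 (u i) := by rw [h2]
        _ = u i := max_eq_right (hunn i)
  set xst : Fin n → ℝ := fun i => ⨆ k, xs k i with hxst_def
  have htd : ∀ i, Tendsto (fun k => xs k i) atTop (𝓝 (xst i)) := by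
    intro i
    refine tendsto_atTop_ciSup (hmonok i) ⟨u i, ?_⟩
    rintro y ⟨k, rfl⟩
    exact hbd k i
  refine ⟨xst, (nashEq_iff hdiag q xst).2 fun i => ?_⟩
  have hL : Tendsto (fun k => xs (k+1) i) atTop (𝓝 (xst i)) :=
    (tendsto_add_atTop_iff_nat 1).2 (htd i)
  have hR : Tendsto (fun k => max 0 (q i + ∑ j, B i j * xs k j)) atTop
      (𝓝 (max 0 (q i + ∑ j, B i j * xst j))) :=
    tendsto_const_nhds.max
      (tendsto_const_nhds.add
        (tendsto_finset_sum _ fun j _ => (htd j).const_mul (B i j)))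
  have heqfun : (fun k => xs (k+1) i) = fun k => max 0 (q i + ∑ j, B i j * xs k j) := by
    funext k
    rw [hstep k]
    rfl
  rw [heqfun] at hL
  exact tendsto_nhds_unique hL hR

end PG

end PGAux

theorem unique_nash_iff_real_eig_gt_neg_one_Z (n : ℕ) (hn : 1 ≤ n)
    (G : Matrix (Fin n) (Fin n) ℝ) (hdiag : ∀ i, G i i = 0)
    (hZ : ∀ i j, i ≠ j → G i j ≤ 0) :
    (∀ q : Fin n → ℝ, ∃! x : Fin n → ℝ, NashEq G q x) ↔
      (∀ μ : ℝ, HasRealEigenvalue G μ → -1 < μ) := by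
  constructor
  · intro huniq μ hev
    by_contra hlt
    push_neg at hlt
    obtain ⟨q, x, y, hx, hy, hxy⟩ := PG.two_equilibria hdiag hlt hev
    obtain ⟨z, hz, huz⟩ := huniq q
    exact hxy ((huz x hx).trans (huz y hy).symm)
  · intro heig q
    obtain ⟨x, hx⟩ := PG.nash_exists hdiag hZ heig q
    exact ⟨x, hx, fun y hy => PG.nash_unique hdiag hZ heig hy hx⟩
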